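/- For every set X, the ring R_X is an integral domain, and it is Noetherian (even when X is infinite). -/

import Mathlib

set_option synthInstance.maxHeartbeats 1000000
set_option maxHeartbeats 1000000


/-- A multivariate integer polynomial is primitive if it is not divisible by any
integer `m > 1`. -/
def MvPrimitive {X : Type*} (q : MvPolynomial X ℤ) : Prop :=
  ∀ m : ℤ, 1 < m → ¬ (MvPolynomial.C m ∣ q)

/-- `ℚ(X)`, the field of fractions of `ℤ[X]`. -/
abbrev FracField (X : Type*) := FractionRing (MvPolynomial X ℤ)

/-- The set of elements `p / q` of `ℚ(X)` with `p, q ∈ ℤ[X]` polynomials in the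
variables from `Z` and `q` primitive. -/
def Rset (X : Type*) (Z : Set X) : Set (FracField X) :=
  {x | ∃ p q : MvPolynomial X ℤ,
      p ∈ MvPolynomial.supported ℤ Z ∧ q ∈ MvPolynomial.supported ℤ Z ∧
      MvPrimitive q ∧
      x = algebraMap (MvPolynomial X ℤ) (FracField X) p /
          algebraMap (MvPolynomial X ℤ) (FracField X) q}

/-- `R_Z` as a subring of `ℚ(X)`; since the set `Rset X Z` is closed under the ring
operations (by Gauss's lemma), this subring is exactly `Rset X Z`. -/
noncomputable def Rsub (X : Type*) (Z : Set X) : Subring (FracField X) :=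
  Subring.closure (Rset X Z)

/-- `R⁺_Z`, the additive group of `R_Z`, as an additive subgroup of `ℚ(X)`;
since the set `Rset X Z` is closed under addition and negation (by Gauss's lemma),
this additive subgroup is exactly `Rset X Z`. -/
noncomputable def Radd (X : Type*) (Z : Set X) : AddSubgroup (FracField X) :=
  AddSubgroup.closure (Rset X Z)

open MvPolynomial

section Aux

variable {X : Type*}

/-- The canonical map `ℤ[X] → ℚ(X)`. -/
noncomputable abbrev auxf (X : Type*) : MvPolynomial X ℤ →+* FracField X :=
  algebraMap _ _

lemma MvPrimitive.one' : MvPrimitive (1 : MvPolynomial X ℤ) := by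
  intro m hm hdvd
  rw [MvPolynomial.C_dvd_iff_dvd_coeff] at hdvd
  have := hdvd 0
  rw [MvPolynomial.coeff_zero_one] at this
  exact absurd (Int.le_of_dvd one_pos this) (by omega)

lemma MvPrimitive.ne_zero' {q : MvPolynomial X ℤ} (h : MvPrimitive q) : q ≠ 0 := by
  rintro rfl
  exact h 2 one_lt_two (dvd_zero _)

lemma MvPrimitive.map_ne_zero' {q : MvPolynomial X ℤ} (h : MvPrimitive q) :
    auxf X q ≠ 0 := by
  simpa [IsFractionRing.to_map_eq_zero_iff] using h.ne_zero'

/-- Gauss's lemma: the product of primitive polynomials is primitive. -/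
lemma MvPrimitive.mul' {q₁ q₂ : MvPolynomial X ℤ} (h₁ : MvPrimitive q₁)
    (h₂ : MvPrimitive q₂) : MvPrimitive (q₁ * q₂) := by
  intro m hm hdvd
  obtain ⟨p, hp, hpm⟩ := Nat.exists_prime_and_dvd (n := m.toNat) (by omega)
  haveI : Fact p.Prime := ⟨hp⟩
  have hpdvd : MvPolynomial.C (p : ℤ) ∣ q₁ * q₂ := by
    refine dvd_trans ?_ hdvd
    have hpm' : (p : ℤ) ∣ m := by
      have := Int.natCast_dvd_natCast.mpr hpm
      rwa [Int.toNat_of_nonneg (by omega)] at this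
    exact map_dvd MvPolynomial.C hpm'
  rw [MvPolynomial.C_dvd_iff_zmod, _root_.map_mul] at hpdvd
  rcases mul_eq_zero.mp hpdvd with h | h
  · exact h₁ (p : ℤ) (by exact_mod_cast hp.one_lt)
      ((MvPolynomial.C_dvd_iff_zmod p q₁).mpr h)
  · exact h₂ (p : ℤ) (by exact_mod_cast hp.one_lt)
      ((MvPolynomial.C_dvd_iff_zmod p q₂).mpr h)

/-- `Rset X Set.univ` as a subring. -/
noncomputable def RSring (X : Type*) : Subring (FracField X) where
  carrier := Rset X Set.univ
  one_mem' := ⟨1, 1, by simp, by simp, MvPrimitive.one', by simp⟩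
  zero_mem' := ⟨0, 1, by simp, by simp, MvPrimitive.one', by simp⟩
  mul_mem' := by
    rintro x y ⟨p₁, q₁, -, -, h₁, rfl⟩ ⟨p₂, q₂, -, -, h₂, rfl⟩
    exact ⟨p₁ * p₂, q₁ * q₂, by simp [MvPolynomial.supported_univ],
      by simp [MvPolynomial.supported_univ], h₁.mul' h₂,
      by rw [map_mul, map_mul, div_mul_div_comm]⟩
  add_mem' := by
    rintro x y ⟨p₁, q₁, -, -, h₁, rfl⟩ ⟨p₂, q₂, -, -, h₂, rfl⟩
    refine ⟨p₁ * q₂ + q₁ * p₂, q₁ * q₂, by simp [MvPolynomial.supported_univ],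
      by simp [MvPolynomial.supported_univ], h₁.mul' h₂, ?_⟩
    rw [div_add_div _ _ h₁.map_ne_zero' h₂.map_ne_zero', map_add, map_mul, map_mul, map_mul]
  neg_mem' := by
    rintro x ⟨p, q, -, -, h, rfl⟩
    exact ⟨-p, q, by simp [MvPolynomial.supported_univ],
      by simp [MvPolynomial.supported_univ], h, by rw [map_neg]; exact (neg_div (auxf X q) (auxf X p)).symm⟩

lemma mem_Rsub_univ_iff {x : FracField X} :
    x ∈ Rsub X Set.univ ↔
      ∃ p q : MvPolynomial X ℤ, MvPrimitive q ∧ x = auxf X p / auxf X q := by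
  have : Rsub X Set.univ = RSring X := by
    rw [Rsub, show Rset X Set.univ = (RSring X : Set (FracField X)) from rfl,
      Subring.closure_eq]
  rw [this]
  constructor
  · rintro ⟨p, q, -, -, h, rfl⟩
    exact ⟨p, q, h, rfl⟩
  · rintro ⟨p, q, h, rfl⟩
    exact ⟨p, q, by simp [MvPolynomial.supported_univ],
      by simp [MvPolynomial.supported_univ], h, rfl⟩

/-- Every nonzero integer polynomial is an integer times a primitive polynomial. -/
lemma exists_content (p : MvPolynomial X ℤ) (hp : p ≠ 0) :
    ∃ (c : ℤ) (p₀ : MvPolynomial X ℤ), MvPrimitive p₀ ∧ p = MvPolynomial.C c * p₀ := by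
  set c := p.support.gcd p.coeff with hc
  have hdvd : ∀ i, c ∣ p.coeff i := by
    intro i
    by_cases hi : i ∈ p.support
    · exact Finset.gcd_dvd hi
    · simp [MvPolynomial.notMem_support_iff.mp hi]
  have hcne : c ≠ 0 := by
    intro h0
    apply hp
    ext i
    by_cases hi : i ∈ p.support
    · exact absurd (Finset.gcd_eq_zero_iff.mp h0 i hi)
        (MvPolynomial.mem_support_iff.mp hi)
    · simp [MvPolynomial.notMem_support_iff.mp hi]
  obtain ⟨p₀, hp₀⟩ := (MvPolynomial.C_dvd_iff_dvd_coeff c p).mpr hdvd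
  refine ⟨c, p₀, ?_, hp₀⟩
  intro m hm hmdvd
  obtain ⟨r, hr⟩ := hmdvd
  have hdvd2 : MvPolynomial.C (c * m) ∣ p := by
    exact ⟨r, by rw [hp₀, hr, map_mul]; ring⟩
  have : c * m ∣ c := by
    refine Finset.dvd_gcd fun i _ => ?_
    exact (MvPolynomial.C_dvd_iff_dvd_coeff (c * m) p).mp hdvd2 i
  have : m ∣ 1 := by
    have h' : c * m ∣ c * 1 := by simpa using this
    exact (mul_dvd_mul_iff_left hcne).mp h'
  exact absurd (Int.le_of_dvd one_pos this) (by omega)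

/-- The canonical ring map `ℤ → R_X`. -/
noncomputable def zeta (X : Type*) : ℤ →+* Rsub X Set.univ :=
  RingHom.codRestrict ((auxf X).comp MvPolynomial.C) _ (fun c => by
    rw [mem_Rsub_univ_iff]
    exact ⟨MvPolynomial.C c, 1, MvPrimitive.one', by simp⟩)

/-- A quotient of primitive polynomials is a unit in `R_X`. -/
lemma isUnit_primdiv {p q : MvPolynomial X ℤ} (hp : MvPrimitive p) (hq : MvPrimitive q)
    (hmem : auxf X p / auxf X q ∈ Rsub X Set.univ) :
    IsUnit (⟨auxf X p / auxf X q, hmem⟩ : Rsub X Set.univ) := by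
  have hmem' : auxf X q / auxf X p ∈ Rsub X Set.univ :=
    mem_Rsub_univ_iff.mpr ⟨q, p, hp, rfl⟩
  refine IsUnit.of_mul_eq_one ⟨auxf X q / auxf X p, hmem'⟩ ?_
  ext
  show (auxf X p / auxf X q) * (auxf X q / auxf X p) = 1
  rw [div_mul_div_comm, mul_comm (auxf X p)]
  exact div_self (mul_ne_zero hq.map_ne_zero' hp.map_ne_zero')

/-- Every element of `R_X` is a unit times an integer. -/
lemma exists_unit_mul (x : Rsub X Set.univ) (hx : x ≠ 0) :
    ∃ (c : ℤ) (v : Rsub X Set.univ), IsUnit v ∧ x = v * zeta X c := by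
  obtain ⟨p, q, hq, hxeq⟩ := mem_Rsub_univ_iff.mp x.2
  have hp : p ≠ 0 := by
    rintro rfl
    apply hx
    ext
    simp [hxeq]
  obtain ⟨c, p₀, hp₀, rfl⟩ := exists_content p hp
  have hmem : auxf X p₀ / auxf X q ∈ Rsub X Set.univ :=
    mem_Rsub_univ_iff.mpr ⟨p₀, q, hq, rfl⟩
  refine ⟨c, ⟨auxf X p₀ / auxf X q, hmem⟩, isUnit_primdiv hp₀ hq hmem, ?_⟩
  ext
  show (x : FracField X) = (auxf X p₀ / auxf X q) * auxf X (MvPolynomial.C c)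
  rw [hxeq, map_mul]
  field_simp

lemma isPrincipalIdealRing_Rsub : IsPrincipalIdealRing (Rsub X Set.univ) := by
  constructor
  intro I
  set J : Ideal ℤ := I.comap (zeta X) with hJ
  obtain ⟨n₀, hn₀⟩ := (IsPrincipalIdealRing.principal J).principal
  refine ⟨zeta X n₀, ?_⟩
  apply le_antisymm
  · intro x hxI
    rcases eq_or_ne x 0 with rfl | hx
    · exact zero_mem _
    obtain ⟨c, v, hv, rfl⟩ := exists_unit_mul x hx
    have hcI : zeta X c ∈ I := by
      have := I.mul_mem_left (↑hv.unit⁻¹) hxI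
      rwa [← mul_assoc, IsUnit.val_inv_mul, one_mul] at this
    have hcJ : c ∈ J := hcI
    rw [hn₀, Ideal.submodule_span_eq, Ideal.mem_span_singleton] at hcJ
    obtain ⟨k, rfl⟩ := hcJ
    rw [Ideal.submodule_span_eq, Ideal.mem_span_singleton]
    exact Dvd.dvd.mul_left ⟨zeta X k, by rw [map_mul]⟩ v
  · rw [Ideal.submodule_span_eq, Ideal.span_le, Set.singleton_subset_iff]
    have : n₀ ∈ J := by rw [hn₀]; exact Submodule.mem_span_singleton_self n₀
    exact this

end Aux

/-- For every set `X`, the ring `R_X` is an integral domain and is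
Noetherian (even when `X` is infinite). -/
theorem Rsub_isDomain_isNoetherianRing (X : Type*) :
    IsDomain (Rsub X Set.univ) ∧ IsNoetherianRing (Rsub X Set.univ) := by
  refine ⟨inferInstance, ?_⟩
  haveI := isPrincipalIdealRing_Rsub (X := X)
  exact PrincipalIdealRing.isNoetherianRing
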